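/- arXiv:1409.8345 — 2 statements merged into one kernel-verified Lean document; each statement's English description precedes it below -/
import Mathlib

section
/- Let F be a Banach space and S : [0,∞) → L(F) with S(0) = I, t ↦ S(t)f continuous for each f, and suppose for a fixed f ∈ F there exists g ∈ F with lim_{t→0⁺} (S(t)f − f)/t = g. Define R(t) = exp(i·a·(S(t) − I)) for a fixed real a ≠ 0. Then lim_{t→0⁺} (R(t)f − f)/t = i·a·g. -/
open Filter Topology
open scoped Nat
set_option maxHeartbeats 1000000

/-- Powers of an operator with norm at most `M` grow at most like `M ^ n`. -/
lemma pow_apply_norm_le {F : Type*} [NormedAddCommGroup F] [NormedSpace ℂ F]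
    (A : F →L[ℂ] F) (M : ℝ) (hM : ‖A‖ ≤ M) :
    ∀ (n : ℕ) (y : F), ‖(A ^ n) y‖ ≤ M ^ n * ‖y‖ := by
  intro n
  induction n with
  | zero => intro y; simp
  | succ n ih =>
    intro y
    have h1 : (A ^ (n + 1)) y = (A ^ n) (A y) := by
      rw [pow_succ]; rfl
    have hMn : (0:ℝ) ≤ M ^ n := pow_nonneg (le_trans (norm_nonneg A) hM) n
    rw [h1]
    calc ‖(A ^ n) (A y)‖ ≤ M ^ n * ‖A y‖ := ih (A y)
      _ ≤ M ^ n * (M * ‖y‖) := by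
          refine mul_le_mul_of_nonneg_left ?_ hMn
          exact (A.le_opNorm y).trans (mul_le_mul_of_nonneg_right hM (norm_nonneg y))
      _ = M ^ (n + 1) * ‖y‖ := by ring

/-- Remainder bound for the operator exponential: the second-order remainder of
`exp A` applied to `f` is controlled by `‖A (A f)‖`. -/
lemma exp_remainder_bound {F : Type*} [NormedAddCommGroup F] [NormedSpace ℂ F]
    [CompleteSpace F] (A : F →L[ℂ] F) (f : F) (M : ℝ) (hM : ‖A‖ ≤ M) :
    ‖NormedSpace.exp A f - f - A f‖ ≤ (∑' n : ℕ, M ^ n / n !) * ‖A (A f)‖ := by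
  have hM0 : 0 ≤ M := le_trans (norm_nonneg A) hM
  have hs : Summable fun n : ℕ => ((n ! : ℂ))⁻¹ • A ^ n :=
    NormedSpace.expSeries_summable' A
  have hsf : Summable fun n : ℕ => ((n ! : ℂ))⁻¹ • (A ^ n) f := by
    have := hs.map (ContinuousLinearMap.apply ℂ F f)
      (ContinuousLinearMap.apply ℂ F f).continuous
    simpa [Function.comp_def] using this
  have happ : NormedSpace.exp A f = ∑' n : ℕ, ((n ! : ℂ))⁻¹ • (A ^ n) f := by
    rw [NormedSpace.exp_eq_tsum (𝕂 := ℂ)]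
    have := (ContinuousLinearMap.apply ℂ F f).map_tsum hs
    simpa using this
  have hsf1 : Summable fun n : ℕ => (((n + 1)! : ℂ))⁻¹ • (A ^ (n + 1)) f := by
    have := (summable_nat_add_iff (f := fun n : ℕ => ((n ! : ℂ))⁻¹ • (A ^ n) f) 1).2 hsf
    simpa using this
  have hsplit : NormedSpace.exp A f
      = f + A f + ∑' n : ℕ, (((n + 2)! : ℂ))⁻¹ • (A ^ (n + 2)) f := by
    rw [happ, Summable.tsum_eq_zero_add hsf]
    rw [Summable.tsum_eq_zero_add (by simpa using hsf1)]
    simp [add_assoc]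
  have hrem : NormedSpace.exp A f - f - A f
      = ∑' n : ℕ, (((n + 2)! : ℂ))⁻¹ • (A ^ (n + 2)) f := by
    rw [hsplit]; abel
  rw [hrem]
  have hterm : ∀ n : ℕ,
      ‖(((n + 2)! : ℂ))⁻¹ • (A ^ (n + 2)) f‖ ≤ M ^ n / n ! * ‖A (A f)‖ := by
    intro n
    have h1 : (A ^ (n + 2)) f = (A ^ n) (A (A f)) := by
      have h : A ^ (n + 2) = A ^ n * (A * A) := by rw [pow_add, pow_two]
      rw [h]; rfl
    rw [norm_smul, h1, norm_inv, Complex.norm_natCast]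
    have h2 : ‖(A ^ n) (A (A f))‖ ≤ M ^ n * ‖A (A f)‖ :=
      pow_apply_norm_le A M hM n (A (A f))
    have h3 : ((((n + 2)! : ℕ) : ℝ))⁻¹ ≤ (((n ! : ℕ) : ℝ))⁻¹ := by
      apply inv_anti₀
      · exact_mod_cast Nat.factorial_pos n
      · exact_mod_cast Nat.factorial_le (by omega)
    calc ((((n + 2)! : ℕ) : ℝ))⁻¹ * ‖(A ^ (n + 2) : F →L[ℂ] F) f‖
        ≤ (((n ! : ℕ) : ℝ))⁻¹ * (M ^ n * ‖A (A f)‖) := by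
          rw [h1]
          exact mul_le_mul h3 h2 (norm_nonneg _)
            (inv_nonneg.2 (by positivity))
      _ = M ^ n / n ! * ‖A (A f)‖ := by ring
  have hRHS : Summable fun n : ℕ => M ^ n / n ! * ‖A (A f)‖ :=
    (Real.summable_pow_div_factorial M).mul_right _
  have hnormsum : Summable fun n : ℕ => ‖(((n + 2)! : ℂ))⁻¹ • (A ^ (n + 2)) f‖ :=
    Summable.of_nonneg_of_le (fun n => norm_nonneg _) hterm hRHS
  calc ‖∑' n : ℕ, (((n + 2)! : ℂ))⁻¹ • (A ^ (n + 2)) f‖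
      ≤ ∑' n : ℕ, ‖(((n + 2)! : ℂ))⁻¹ • (A ^ (n + 2)) f‖ :=
        norm_tsum_le_tsum_norm hnormsum
    _ ≤ ∑' n : ℕ, M ^ n / n ! * ‖A (A f)‖ := Summable.tsum_le_tsum hterm hnormsum hRHS
    _ = (∑' n : ℕ, M ^ n / n !) * ‖A (A f)‖ := tsum_mul_right

theorem chernoff_tangency_of_exp_family
    {F : Type*} [NormedAddCommGroup F] [NormedSpace ℂ F] [CompleteSpace F]
    (S : ℝ → F →L[ℂ] F) (a : ℝ) (ha : a ≠ 0)
    (hS0 : S 0 = 1)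
    (hcont : ∀ f : F, ContinuousOn (fun t => S t f) (Set.Ici 0))
    (f g : F)
    (hder : Tendsto (fun t : ℝ => t⁻¹ • (S t f - f)) (𝓝[>] 0) (𝓝 g)) :
    Tendsto
      (fun t : ℝ => t⁻¹ •
        (NormedSpace.exp (((Complex.I : ℂ) * (a : ℂ)) • (S t - 1)) f - f))
      (𝓝[>] 0) (𝓝 (((Complex.I : ℂ) * (a : ℂ)) • g)) := by
  set c : ℂ := (Complex.I : ℂ) * (a : ℂ) with hc
  set A : ℝ → F →L[ℂ] F := fun t => c • (S t - 1) with hA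
  -- uniform bound on `‖S t‖` for `t ∈ [0,1]` by Banach–Steinhaus
  obtain ⟨M', hM'⟩ : ∃ C, ∀ t : Set.Icc (0:ℝ) 1, ‖S t‖ ≤ C := by
    apply banach_steinhaus (g := fun t : Set.Icc (0:ℝ) 1 => S t)
    intro x
    obtain ⟨C, hC⟩ := isCompact_Icc.exists_bound_of_continuousOn
      ((hcont x).mono (Set.Icc_subset_Ici_self))
    exact ⟨C, fun t => hC t t.2⟩
  have hM'0 : 0 ≤ M' := le_trans (norm_nonneg _) (hM' ⟨0, by norm_num⟩)
  set M : ℝ := ‖c‖ * (M' + 1) with hMdef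
  have hAle : ∀ t ∈ Set.Icc (0:ℝ) 1, ‖A t‖ ≤ M := by
    intro t ht
    calc ‖A t‖ = ‖c • (S t - 1)‖ := rfl
      _ ≤ ‖c‖ * ‖S t - 1‖ := norm_smul_le c (S t - 1)
      _ ≤ ‖c‖ * (M' + 1) := by
          refine mul_le_mul_of_nonneg_left ?_ (norm_nonneg c)
          calc ‖S t - 1‖ ≤ ‖S t‖ + ‖(1 : F →L[ℂ] F)‖ := norm_sub_le _ _
            _ ≤ M' + 1 := add_le_add (hM' ⟨t, ht⟩) ContinuousLinearMap.norm_id_le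
  have h01 : ∀ᶠ t in 𝓝[>] (0:ℝ), t ∈ Set.Ioc (0:ℝ) 1 :=
    Ioc_mem_nhdsGT_of_mem (by constructor <;> norm_num)
  -- A t f = c • (S t f - f)
  have hAf : ∀ t, A t f = c • (S t f - f) := by
    intro t; simp [hA]
  -- first-order part tends to c • g
  have hv : Tendsto (fun t : ℝ => t⁻¹ • (A t f)) (𝓝[>] 0) (𝓝 (c • g)) := by
    have := hder.const_smul c
    refine this.congr fun t => ?_
    rw [hAf, smul_comm]
  -- strong continuity at 0 applied to c • g
  have hw : Tendsto (fun t : ℝ => S t (c • g) - c • g) (𝓝[>] 0) (𝓝 0) := by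
    have h3 : Tendsto (fun t : ℝ => S t (c • g)) (𝓝[Set.Ici 0] 0) (𝓝 (c • g)) := by
      have h2 : ContinuousWithinAt (fun t : ℝ => S t (c • g)) (Set.Ici 0) 0 :=
        (hcont (c • g)) 0 Set.self_mem_Ici
      have h2' := h2.tendsto
      rw [hS0] at h2'
      simpa using h2'
    have h4 := h3.mono_left (nhdsWithin_mono _ Set.Ioi_subset_Ici_self)
    simpa using h4.sub (tendsto_const_nhds (x := c • g) (f := 𝓝[>] (0:ℝ)))
  -- second-order quantity t⁻¹ • A t (A t f) → 0
  have hAA : Tendsto (fun t : ℝ => t⁻¹ • (A t (A t f))) (𝓝[>] 0) (𝓝 0) := by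
    have hAx : ∀ (t : ℝ) (x : F), A t x = c • ((S t - 1) x) := fun t x => rfl
    have hkey : ∀ t : ℝ, t⁻¹ • (A t (A t f))
        = c • ((S t - 1) (t⁻¹ • (A t f)) ) := by
      intro t
      rw [hAx t (A t f), smul_comm, (S t - 1).map_smul_of_tower]
    have hdiff : Tendsto (fun t : ℝ => (S t - 1) (t⁻¹ • (A t f))) (𝓝[>] 0) (𝓝 0) := by
      have heq : ∀ t : ℝ, (S t - 1) (t⁻¹ • (A t f))
          = (S t - 1) (t⁻¹ • (A t f) - c • g) + (S t (c • g) - c • g) := by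
        intro t
        have h9 : (S t - 1) (c • g) = S t (c • g) - c • g := by
          simp [smul_sub]
        rw [map_sub, h9]
        abel
      have h1 : Tendsto (fun t : ℝ => (S t - 1) (t⁻¹ • (A t f) - c • g)) (𝓝[>] 0) (𝓝 0) := by
        apply squeeze_zero_norm' (a := fun t => (M' + 1) * ‖t⁻¹ • (A t f) - c • g‖)
        · filter_upwards [h01] with t ht
          calc ‖(S t - 1) (t⁻¹ • (A t f) - c • g)‖
              ≤ ‖S t - 1‖ * ‖t⁻¹ • (A t f) - c • g‖ := (S t - 1).le_opNorm _
            _ ≤ (M' + 1) * ‖t⁻¹ • (A t f) - c • g‖ := by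
                refine mul_le_mul_of_nonneg_right ?_ (norm_nonneg _)
                calc ‖S t - 1‖ ≤ ‖S t‖ + ‖(1 : F →L[ℂ] F)‖ := norm_sub_le _ _
                  _ ≤ M' + 1 := add_le_add (hM' ⟨t, Set.Ioc_subset_Icc_self ht⟩)
                      ContinuousLinearMap.norm_id_le
        · have h8 : Tendsto (fun t : ℝ => t⁻¹ • (A t f) - c • g) (𝓝[>] 0)
              (𝓝 (c • g - c • g)) := hv.sub tendsto_const_nhds
          rw [sub_self] at h8
          simpa using (h8.norm.const_mul (M' + 1))
      have h7 := h1.add hw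
      simp only [add_zero] at h7
      exact h7.congr fun t => (heq t).symm
    have := hdiff.const_smul c
    simp only [smul_zero] at this
    exact this.congr fun t => (hkey t).symm
  -- remainder term tends to 0
  set C : ℝ := ∑' n : ℕ, M ^ n / n ! with hCdef
  have hC0 : 0 ≤ C := tsum_nonneg fun n => by positivity
  have hremlim : Tendsto
      (fun t : ℝ => t⁻¹ • (NormedSpace.exp (A t) f - f - A t f)) (𝓝[>] 0) (𝓝 0) := by
    apply squeeze_zero_norm' (a := fun t => C * ‖t⁻¹ • (A t (A t f))‖)
    · filter_upwards [h01] with t ht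
      have hb := exp_remainder_bound (A t) f M (hAle t (Set.Ioc_subset_Icc_self ht))
      rw [norm_smul, norm_smul]
      calc ‖t⁻¹‖ * ‖NormedSpace.exp (A t) f - f - A t f‖
          ≤ ‖t⁻¹‖ * (C * ‖A t (A t f)‖) :=
            mul_le_mul_of_nonneg_left hb (norm_nonneg _)
        _ = C * (‖t⁻¹‖ * ‖A t (A t f)‖) := by ring
    · simpa using (hAA.norm.const_mul C)
  -- combine
  have hfinal := hv.add hremlim
  rw [add_zero] at hfinal
  refine hfinal.congr fun t => ?_
  rw [← smul_add]
  congr 1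
  abel
end

section
/- (Chernoff product formula, bounded-generator special case.) Let F be a Banach space, G : [0,∞) → L(F) with G(0) = I, t ↦ G(t)f continuous for each f, ‖G(t)‖ ≤ e^{ω t} for some ω ∈ ℝ, and suppose L is a bounded operator such that lim_{t→0⁺}(G(t)f − f)/t = Lf for all f ∈ F. Then for every f ∈ F and t ≥ 0, (G(t/n))^n f → e^{tL} f as n → ∞. -/
open Filter Topology

section ChernoffAux

variable {F : Type*} [NormedAddCommGroup F] [NormedSpace ℂ F] [CompleteSpace F]

/-- Noncommutative telescoping identity. -/
lemma chernoff_telescope {R : Type*} [Ring R] (a b : R) (n : ℕ) :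
    a ^ n - b ^ n = ∑ i ∈ Finset.range n, a ^ (n - 1 - i) * (a - b) * b ^ i := by
  induction n with
  | zero => simp
  | succ n ih =>
    rw [Finset.sum_range_succ]
    have hcongr : ∀ i ∈ Finset.range n, a ^ (n + 1 - 1 - i) * (a - b) * b ^ i
        = a * (a ^ (n - 1 - i) * (a - b) * b ^ i) := by
      intro i hi
      rw [Finset.mem_range] at hi
      rw [show n + 1 - 1 - i = (n - 1 - i) + 1 by omega, pow_succ']
      noncomm_ring
    rw [Finset.sum_congr rfl hcongr, ← Finset.mul_sum, ← ih]
    have : n + 1 - 1 - n = 0 := by omega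
    rw [this, pow_zero, one_mul, pow_succ', pow_succ']
    noncomm_ring

/-- Difference quotient of the exponential at `0`, in operator norm. -/
lemma chernoff_exp_slope (L : F →L[ℂ] F) :
    Tendsto (fun s : ℝ => s⁻¹ • (NormedSpace.exp ((s : ℂ) • L) - 1)) (𝓝[>] (0:ℝ)) (𝓝 L) := by
  have h1 : HasDerivAt (fun z : ℂ => NormedSpace.exp (z • L))
      (L * NormedSpace.exp (((0:ℝ):ℂ) • L)) ((0:ℝ):ℂ) := hasDerivAt_exp_smul_const' L _
  have hofReal : HasDerivAt (fun s : ℝ => (s : ℂ)) 1 0 := by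
    simpa using (hasDerivAt_id (0:ℝ)).ofReal_comp
  have h2 : HasDerivAt (fun s : ℝ => NormedSpace.exp ((s : ℂ) • L)) L 0 := by
    have := HasDerivAt.scomp (h := fun s : ℝ => (s : ℂ)) (x := (0:ℝ)) h1 hofReal
    simpa [Function.comp_def, NormedSpace.exp_zero] using this
  have h3 := hasDerivAt_iff_tendsto_slope.mp h2
  have h4 : Tendsto (slope (fun s : ℝ => NormedSpace.exp ((s : ℂ) • L)) 0) (𝓝[>] (0:ℝ)) (𝓝 L) :=
    h3.mono_left (nhdsWithin_mono _ fun x hx => ne_of_gt hx)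
  refine h4.congr fun s => ?_
  simp [slope_def_module, NormedSpace.exp_zero]

lemma chernoff_exp_slope_apply (L : F →L[ℂ] F) (g : F) :
    Tendsto (fun s : ℝ => s⁻¹ • (NormedSpace.exp ((s : ℂ) • L) g - g)) (𝓝[>] (0:ℝ))
      (𝓝 (L g)) := by
  have hc : Continuous fun T : F →L[ℂ] F => T g := (ContinuousLinearMap.apply ℂ F g).continuous
  have := (hc.tendsto L).comp (chernoff_exp_slope L)
  refine this.congr fun s => ?_
  simp [Function.comp]

lemma chernoff_exp_apply_cont (L : F →L[ℂ] F) (g : F) :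
    Continuous fun s : ℝ => NormedSpace.exp ((s : ℂ) • L) g := by
  have h1 : Continuous fun s : ℝ => (s : ℂ) • L :=
    (Complex.continuous_ofReal).smul continuous_const
  let +nondep : NormedAlgebra ℚ (F →L[ℂ] F) := .restrictScalars ℚ ℂ (F →L[ℂ] F)
  exact (ContinuousLinearMap.apply ℂ F g).continuous.comp
    (NormedSpace.exp_continuous.comp h1)

lemma chernoff_D_slope (G : ℝ → F →L[ℂ] F) (L : F →L[ℂ] F)
    (hgen : ∀ f : F, Tendsto (fun t : ℝ => t⁻¹ • (G t f - f)) (𝓝[>] 0) (𝓝 (L f))) (g : F) :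
    Tendsto (fun s : ℝ => s⁻¹ • (G s g - NormedSpace.exp ((s : ℂ) • L) g)) (𝓝[>] (0:ℝ))
      (𝓝 0) := by
  have h := (hgen g).sub (chernoff_exp_slope_apply L g)
  rw [sub_self] at h
  refine h.congr fun s => ?_
  rw [← smul_sub, sub_sub_sub_cancel_right]

lemma chernoff_unif_bound (G : ℝ → F →L[ℂ] F) (L : F →L[ℂ] F)
    (hGcont : ∀ f : F, ContinuousOn (fun t : ℝ => G t f) (Set.Ici 0))
    (hgen : ∀ f : F, Tendsto (fun t : ℝ => t⁻¹ • (G t f - f)) (𝓝[>] 0) (𝓝 (L f))) :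
    ∃ M : ℝ, 0 ≤ M ∧ ∀ s ∈ Set.Ioc (0:ℝ) 1,
      ‖G s - NormedSpace.exp ((s : ℂ) • L)‖ ≤ M * s := by
  set A : Set.Ioc (0:ℝ) 1 → F →L[ℂ] F :=
    fun s => ((s : ℝ))⁻¹ • (G s - NormedSpace.exp (((s : ℝ) : ℂ) • L)) with hA
  have hpt : ∀ g : F, ∃ C, ∀ s, ‖A s g‖ ≤ C := by
    intro g
    have h0 := chernoff_D_slope G L hgen g
    have hev : ∀ᶠ s in 𝓝[>] (0:ℝ),
        ‖s⁻¹ • (G s g - NormedSpace.exp ((s : ℂ) • L) g)‖ < 1 := by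
      have := NormedAddCommGroup.tendsto_nhds_zero.mp h0 1 one_pos
      exact this
    obtain ⟨δ, hδpos, hδ⟩ := mem_nhdsGT_iff_exists_Ioo_subset.mp hev
    have hδ0 : (0:ℝ) < δ := hδpos
    -- continuity bound on [δ/2, 1]
    have hφcont : ContinuousOn
        (fun s : ℝ => ‖s⁻¹ • (G s g - NormedSpace.exp ((s : ℂ) • L) g)‖)
        (Set.Icc (δ/2) 1) := by
      have hδ2 : (0:ℝ) < δ / 2 := by linarith
      have hsub : Set.Icc (δ/2) 1 ⊆ Set.Ici (0:ℝ) := fun x hx => le_trans hδ2.le hx.1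
      have hinv : ContinuousOn (fun s : ℝ => s⁻¹) (Set.Icc (δ/2) 1) :=
        ContinuousOn.inv₀ continuousOn_id fun x hx => by
          have : (0:ℝ) < x := lt_of_lt_of_le hδ2 hx.1
          exact ne_of_gt this
      exact ((hinv.smul (((hGcont g).mono hsub).sub
        ((chernoff_exp_apply_cont L g).continuousOn)))).norm
    obtain ⟨C₁, hC₁⟩ := (isCompact_Icc).exists_bound_of_continuousOn hφcont
    refine ⟨max 1 C₁, fun s => ?_⟩
    have hAs : ‖A s g‖ = ‖(s : ℝ)⁻¹ • (G s g - NormedSpace.exp (((s:ℝ) : ℂ) • L) g)‖ := by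
      simp [hA]
    rw [hAs]
    rcases lt_or_ge (s : ℝ) δ with hlt | hge
    · exact le_trans (hδ ⟨s.2.1, hlt⟩).le (le_max_left _ _)
    · have hmem : (s : ℝ) ∈ Set.Icc (δ/2) 1 := ⟨by linarith, s.2.2⟩
      have h5 := hC₁ _ hmem
      rw [norm_norm] at h5
      exact le_trans h5 (le_max_right _ _)
  obtain ⟨M₀, hM₀⟩ := banach_steinhaus hpt
  refine ⟨max M₀ 0, le_max_right _ _, fun s hs => ?_⟩
  have h1 : G s - NormedSpace.exp ((s : ℂ) • L) = s • A ⟨s, hs⟩ := by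
    rw [hA]
    simp [smul_smul, mul_inv_cancel₀ (ne_of_gt hs.1)]
  rw [h1]
  refine le_trans (ContinuousLinearMap.opNorm_smul_le s _) ?_
  rw [Real.norm_eq_abs, abs_of_pos hs.1, mul_comm]
  exact mul_le_mul_of_nonneg_right (le_trans (hM₀ ⟨s, hs⟩) (le_max_left _ _)) hs.1.le

lemma chernoff_key (G : ℝ → F →L[ℂ] F) (L : F →L[ℂ] F)
    (hGcont : ∀ f : F, ContinuousOn (fun t : ℝ => G t f) (Set.Ici 0))
    (hgen : ∀ f : F, Tendsto (fun t : ℝ => t⁻¹ • (G t f - f)) (𝓝[>] 0) (𝓝 (L f)))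
    (f : F) (t : ℝ) {ε : ℝ} (hε : 0 < ε) :
    ∀ᶠ s in 𝓝[>] (0:ℝ), ∀ u ∈ Set.Icc (0:ℝ) t,
      ‖(G s - NormedSpace.exp ((s : ℂ) • L)) (NormedSpace.exp ((u : ℂ) • L) f)‖ ≤ ε * s := by
  obtain ⟨M, hM0, hM⟩ := chernoff_unif_bound G L hGcont hgen
  set r : ℝ := ε / (2 * (M + 1)) with hr
  have hrpos : 0 < r := by positivity
  set K : Set F := (fun u : ℝ => NormedSpace.exp ((u : ℂ) • L) f) '' Set.Icc 0 t with hK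
  have hKc : IsCompact K := isCompact_Icc.image (chernoff_exp_apply_cont L f)
  have hcov : K ⊆ ⋃ g ∈ K, Metric.ball g r := fun g hg =>
    Set.mem_biUnion hg (Metric.mem_ball_self hrpos)
  obtain ⟨T, hTK, hTfin, hTcov⟩ :=
    hKc.elim_finite_subcover_image (fun g _ => Metric.isOpen_ball) hcov
  have hev : ∀ᶠ s in 𝓝[>] (0:ℝ), ∀ g ∈ T,
      ‖s⁻¹ • (G s g - NormedSpace.exp ((s : ℂ) • L) g)‖ < ε / 2 := by
    rw [eventually_all_finite hTfin]
    intro g _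
    exact NormedAddCommGroup.tendsto_nhds_zero.mp (chernoff_D_slope G L hgen g) (ε/2)
      (by positivity)
  have hmem : ∀ᶠ s in 𝓝[>] (0:ℝ), s ∈ Set.Ioc (0:ℝ) 1 := by
    filter_upwards [Ioo_mem_nhdsGT (zero_lt_one (α := ℝ))] with s hs
    exact ⟨hs.1, hs.2.le⟩
  filter_upwards [hev, hmem] with s hs1 hs2
  intro u hu
  set g : F := NormedSpace.exp ((u : ℂ) • L) f with hg
  have hgK : g ∈ K := Set.mem_image_of_mem _ hu
  obtain ⟨g₀, hg₀T, hgball⟩ : ∃ g₀ ∈ T, g ∈ Metric.ball g₀ r := by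
    have := hTcov hgK
    simpa using this
  have hD : ∀ x : F, (G s - NormedSpace.exp ((s : ℂ) • L)) x
      = G s x - NormedSpace.exp ((s : ℂ) • L) x := fun x => rfl
  have hnorm1 : ‖(G s - NormedSpace.exp ((s : ℂ) • L)) (g - g₀)‖ ≤ (M * s) * r := by
    refine le_trans ((G s - NormedSpace.exp ((s : ℂ) • L)).le_opNorm _) ?_
    have h1 : ‖g - g₀‖ ≤ r := by
      have := hgball
      rw [Metric.mem_ball, dist_eq_norm] at this
      exact this.le
    exact mul_le_mul (hM s hs2) h1 (norm_nonneg _) (mul_nonneg hM0 hs2.1.le)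
  have hnorm2 : ‖(G s - NormedSpace.exp ((s : ℂ) • L)) g₀‖ ≤ (ε/2) * s := by
    have h1 := hs1 g₀ hg₀T
    have h2 : G s g₀ - NormedSpace.exp ((s : ℂ) • L) g₀
        = s • (s⁻¹ • (G s g₀ - NormedSpace.exp ((s : ℂ) • L) g₀)) := by
      rw [smul_smul, mul_inv_cancel₀ (ne_of_gt hs2.1), one_smul]
    rw [hD, h2, norm_smul, Real.norm_eq_abs, abs_of_pos hs2.1, mul_comm]
    exact mul_le_mul_of_nonneg_right h1.le hs2.1.le
  have hsplit : (G s - NormedSpace.exp ((s : ℂ) • L)) g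
      = (G s - NormedSpace.exp ((s : ℂ) • L)) (g - g₀)
        + (G s - NormedSpace.exp ((s : ℂ) • L)) g₀ := by
    rw [← map_add]
    congr 1
    abel
  calc ‖(G s - NormedSpace.exp ((s : ℂ) • L)) g‖
      ≤ ‖(G s - NormedSpace.exp ((s : ℂ) • L)) (g - g₀)‖
        + ‖(G s - NormedSpace.exp ((s : ℂ) • L)) g₀‖ := by
        rw [hsplit]; exact norm_add_le _ _
    _ ≤ (M * s) * r + (ε/2) * s := add_le_add hnorm1 hnorm2
    _ ≤ (ε/2) * s + (ε/2) * s := by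
        refine add_le_add ?_ le_rfl
        have h3 : M * r ≤ ε / 2 := by
          rw [hr, show M * (ε / (2 * (M + 1))) = M * ε / (2 * (M + 1)) from
            (mul_div_assoc _ _ _).symm,
            div_le_div_iff₀ (by positivity) (by norm_num : (0:ℝ) < 2)]
          nlinarith [hM0, hε.le]
        calc (M * s) * r = (M * r) * s := by ring
          _ ≤ (ε/2) * s := mul_le_mul_of_nonneg_right h3 hs2.1.le
    _ = ε * s := by ring

lemma chernoff_pow_norm (G : ℝ → F →L[ℂ] F) (ω : ℝ)
    (hGnorm : ∀ t : ℝ, 0 ≤ t → ‖G t‖ ≤ Real.exp (ω * t)) (s : ℝ) (hs : 0 ≤ s) (m : ℕ) :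
    ‖G s ^ m‖ ≤ Real.exp (ω * s) ^ m := by
  induction m with
  | zero =>
    simpa [ContinuousLinearMap.one_def] using ContinuousLinearMap.norm_id_le (𝕜 := ℂ) (E := F)
  | succ m ih =>
    rw [pow_succ, pow_succ]
    exact le_trans (norm_mul_le _ _)
      (mul_le_mul ih (hGnorm s hs) (norm_nonneg _) (pow_nonneg (Real.exp_pos _).le _))

end ChernoffAux

theorem chernoff_product_formula_bounded_generator
    {F : Type*} [NormedAddCommGroup F] [NormedSpace ℂ F] [CompleteSpace F]
    (G : ℝ → F →L[ℂ] F) (ω : ℝ)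
    (hG0 : G 0 = 1)
    (hGcont : ∀ f : F, ContinuousOn (fun t : ℝ => G t f) (Set.Ici 0))
    (hGnorm : ∀ t : ℝ, 0 ≤ t → ‖G t‖ ≤ Real.exp (ω * t))
    (L : F →L[ℂ] F)
    (hgen : ∀ f : F, Tendsto (fun t : ℝ => t⁻¹ • (G t f - f)) (𝓝[>] 0) (𝓝 (L f))) :
    ∀ (f : F) (t : ℝ), 0 ≤ t →
      Tendsto (fun n : ℕ => ((G (t / n)) ^ n) f) atTop
        (𝓝 (NormedSpace.exp ((t : ℂ) • L) f)) := by
  intro f t ht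
  rcases eq_or_lt_of_le ht with h0 | htpos
  · -- t = 0
    have heq : (fun n : ℕ => ((G (t / n)) ^ n) f) = fun _ : ℕ => f := by
      funext n
      rw [← h0, zero_div, hG0, one_pow]
      rfl
    rw [heq, ← h0]
    simpa [NormedSpace.exp_zero] using (tendsto_const_nhds : Tendsto (fun _ : ℕ => f) atTop (𝓝 f))
  · -- t > 0
    have hC : (0:ℝ) < Real.exp (|ω| * t) := Real.exp_pos _
    set C : ℝ := Real.exp (|ω| * t) with hCdef
    rw [Metric.tendsto_nhds]
    intro ε hε
    set ε' : ℝ := ε / (C * t + 1) with hε'def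
    have hε' : 0 < ε' := by positivity
    have hkey := chernoff_key G L hGcont hgen f t hε'
    have htn : Tendsto (fun n : ℕ => t / n) atTop (𝓝[>] (0:ℝ)) := by
      rw [tendsto_nhdsWithin_iff]
      constructor
      · exact tendsto_const_div_atTop_nhds_zero_nat t
      · filter_upwards [eventually_ge_atTop 1] with n hn
        have hn0 : (0:ℝ) < n := by exact_mod_cast hn
        exact div_pos htpos hn0
    have hfinal : ∀ᶠ n : ℕ in atTop,
        dist (((G (t / n)) ^ n) f) (NormedSpace.exp ((t : ℂ) • L) f) < ε := by
      filter_upwards [htn.eventually hkey, eventually_ge_atTop 1] with n hkn hn1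
      set s : ℝ := t / n with hsdef
      have hn0 : (0:ℝ) < n := by exact_mod_cast hn1
      have hs : 0 < s := div_pos htpos hn0
      have hns : (n : ℝ) * s = t := by
        rw [hsdef]
        field_simp
      set T : F →L[ℂ] F := NormedSpace.exp ((s : ℂ) • L) with hTdef
      have h9 : ((n : ℂ) * (s : ℂ)) = (t : ℂ) := by
        rw [← hns]
        push_cast
        ring
      have hTn : NormedSpace.exp ((t : ℂ) • L) = T ^ n := by
        let +nondep : NormedAlgebra ℚ (F →L[ℂ] F) := .restrictScalars ℚ ℂ (F →L[ℂ] F)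
        rw [hTdef, ← NormedSpace.exp_nsmul, ← Nat.cast_smul_eq_nsmul ℂ, smul_smul, h9]
      -- each summand bound
      have hterm : ∀ i ∈ Finset.range n,
          ‖(G s ^ (n - 1 - i) * (G s - T) * T ^ i) f‖ ≤ C * (ε' * s) := by
        intro i hi
        rw [Finset.mem_range] at hi
        have h8 : ((i : ℂ) * (s : ℂ)) = (((i : ℝ) * s : ℝ) : ℂ) := by
          push_cast
          ring
        have hTi : T ^ i = NormedSpace.exp ((((i : ℝ) * s : ℝ) : ℂ) • L) := by
          let +nondep : NormedAlgebra ℚ (F →L[ℂ] F) := .restrictScalars ℚ ℂ (F →L[ℂ] F)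
          rw [hTdef, ← NormedSpace.exp_nsmul, ← Nat.cast_smul_eq_nsmul ℂ, smul_smul, h8]
        have hu : ((i : ℝ) * s : ℝ) ∈ Set.Icc (0:ℝ) t := by
          constructor
          · positivity
          · have hin : (i : ℝ) ≤ n := by exact_mod_cast hi.le
            calc (i : ℝ) * s ≤ (n : ℝ) * s := mul_le_mul_of_nonneg_right hin hs.le
              _ = t := hns
        have h2 : ‖(G s - T) ((T ^ i) f)‖ ≤ ε' * s := by
          rw [hTi]
          exact hkn ((i : ℝ) * s) hu
        have h3 : ‖G s ^ (n - 1 - i)‖ ≤ C := by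
          refine le_trans (chernoff_pow_norm G ω hGnorm s hs.le (n - 1 - i)) ?_
          rw [← Real.exp_nat_mul, hCdef]
          apply Real.exp_le_exp.mpr
          have hms : ((n - 1 - i : ℕ) : ℝ) * s ≤ t := by
            have hle : ((n - 1 - i : ℕ) : ℝ) ≤ (n : ℝ) := by
              exact_mod_cast Nat.le_of_lt_succ (by omega)
            calc ((n - 1 - i : ℕ) : ℝ) * s ≤ (n : ℝ) * s :=
                mul_le_mul_of_nonneg_right hle hs.le
              _ = t := hns
          have hms0 : (0:ℝ) ≤ ((n - 1 - i : ℕ) : ℝ) * s := by positivity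
          calc ((n - 1 - i : ℕ) : ℝ) * (ω * s) = ω * (((n - 1 - i : ℕ) : ℝ) * s) := by ring
            _ ≤ |ω| * (((n - 1 - i : ℕ) : ℝ) * s) :=
              mul_le_mul_of_nonneg_right (le_abs_self ω) hms0
            _ ≤ |ω| * t := mul_le_mul_of_nonneg_left hms (abs_nonneg ω)
        calc ‖(G s ^ (n - 1 - i) * (G s - T) * T ^ i) f‖
            = ‖(G s ^ (n - 1 - i)) ((G s - T) ((T ^ i) f))‖ := by
              rw [ContinuousLinearMap.mul_apply, ContinuousLinearMap.mul_apply]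
          _ ≤ ‖G s ^ (n - 1 - i)‖ * ‖(G s - T) ((T ^ i) f)‖ :=
              ContinuousLinearMap.le_opNorm _ _
          _ ≤ C * (ε' * s) :=
              mul_le_mul h3 h2 (norm_nonneg _) hC.le
      rw [dist_eq_norm, hTn, ← ContinuousLinearMap.sub_apply, chernoff_telescope]
      calc ‖(∑ i ∈ Finset.range n, G s ^ (n - 1 - i) * (G s - T) * T ^ i) f‖
          = ‖∑ i ∈ Finset.range n, (G s ^ (n - 1 - i) * (G s - T) * T ^ i) f‖ := by
            rw [ContinuousLinearMap.sum_apply]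
        _ ≤ ∑ i ∈ Finset.range n, ‖(G s ^ (n - 1 - i) * (G s - T) * T ^ i) f‖ :=
            norm_sum_le _ _
        _ ≤ ∑ _i ∈ Finset.range n, C * (ε' * s) := Finset.sum_le_sum hterm
        _ = (n : ℝ) * (C * (ε' * s)) := by
            rw [Finset.sum_const, Finset.card_range, nsmul_eq_mul]
        _ = C * t * ε' := by
            rw [← hns]; ring
        _ < ε := by
            rw [hε'def]
            have h4 : C * t / (C * t + 1) < 1 := by
              rw [div_lt_one (by positivity)]
              linarith
            calc C * t * (ε / (C * t + 1)) = (C * t / (C * t + 1)) * ε := by ring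
              _ < 1 * ε := mul_lt_mul_of_pos_right h4 hε
              _ = ε := one_mul ε
    exact hfinal
end
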